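/- Let $M, N$ be weight sequences with $m_k^{1/k} \to \infty$ and $n_k^{1/k} \to \infty$ (where $m_k = M_k/k!$, $n_k = N_k/k!$), satisfying $M_{j+k} \le C^{j+k} N_j N_k$ for all $j,k$ and some $C \ge 1$. Then there exists $D \ge 1$ such that $h_m(t) \le h_n(Dt)^2$ for all $t > 0$, where $h_m(t) = \inf_k m_k t^k$. -/

import Mathlib

open Filter

theorem stmt15 (M N m n : ℕ → ℝ) (hMpos : ∀ k, 0 < M k) (hNpos : ∀ k, 0 < N k)
    (hM0 : M 0 = 1) (hN0 : N 0 = 1)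
    (hMlc : ∀ k : ℕ, 1 ≤ k → M k / M (k - 1) ≤ M (k + 1) / M k)
    (hNlc : ∀ k : ℕ, 1 ≤ k → N k / N (k - 1) ≤ N (k + 1) / N k)
    (hMroot : Tendsto (fun k => M k ^ (1 / (k : ℝ))) atTop atTop)
    (hNroot : Tendsto (fun k => N k ^ (1 / (k : ℝ))) atTop atTop)
    (hm : ∀ k, m k = M k / (Nat.factorial k : ℝ))
    (hn : ∀ k, n k = N k / (Nat.factorial k : ℝ))
    (hmroot : Tendsto (fun k => m k ^ (1 / (k : ℝ))) atTop atTop)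
    (hnroot : Tendsto (fun k => n k ^ (1 / (k : ℝ))) atTop atTop)
    (C : ℝ) (hC : 1 ≤ C)
    (hcomp : ∀ j k : ℕ, M (j + k) ≤ C ^ (j + k) * N j * N k)
    (hm' hn' : ℝ → ℝ)
    (hhm : ∀ t > (0 : ℝ), hm' t = ⨅ k : ℕ, m k * t ^ k)
    (hhn : ∀ t > (0 : ℝ), hn' t = ⨅ k : ℕ, n k * t ^ k) :
    ∃ D : ℝ, 1 ≤ D ∧ ∀ t > (0 : ℝ), hm' t ≤ (hn' (D * t)) ^ 2 := by
  have hCpos : (0 : ℝ) < C := lt_of_lt_of_le one_pos hC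
  refine ⟨C, hC, fun t ht => ?_⟩
  have hs : (0 : ℝ) < C * t := mul_pos hCpos ht
  rw [hhm t ht, hhn (C * t) hs]
  set s := C * t with hsdef
  set a : ℕ → ℝ := fun k => n k * s ^ k with ha
  have hapos : ∀ k, 0 < a k := fun k => by
    have : 0 < n k := by rw [hn]; exact div_pos (hNpos k) (by positivity)
    positivity
  have hbdd : BddBelow (Set.range a) := ⟨0, fun x ⟨k, hk⟩ => hk ▸ (hapos k).le⟩
  have hmpos : ∀ k, 0 < m k * t ^ k := fun k => by
    have : 0 < m k := by rw [hm]; exact div_pos (hMpos k) (by positivity)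
    positivity
  have hbddm : BddBelow (Set.range fun k => m k * t ^ k) :=
    ⟨0, fun x ⟨k, hk⟩ => hk ▸ (hmpos k).le⟩
  have hInonneg : (0 : ℝ) ≤ ⨅ k, a k := le_ciInf fun k => (hapos k).le
  set I := ⨅ k, a k with hI
  -- key pairwise inequality
  have key : ∀ j k : ℕ, (⨅ i : ℕ, m i * t ^ i) ≤ a j * a k := by
    intro j k
    have h1 : (⨅ i : ℕ, m i * t ^ i) ≤ m (j + k) * t ^ (j + k) := ciInf_le hbddm _
    refine h1.trans ?_
    have hfact : ((j.factorial : ℝ) * k.factorial) ≤ ((j + k).factorial : ℝ) := by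
      exact_mod_cast Nat.le_of_dvd (j + k).factorial_pos
        (Nat.factorial_mul_factorial_dvd_factorial_add j k)
    have hfj : (0 : ℝ) < j.factorial := by positivity
    have hfk : (0 : ℝ) < k.factorial := by positivity
    have hstep : m (j + k) ≤ C ^ (j + k) * N j * N k / ((j.factorial : ℝ) * k.factorial) := by
      rw [hm]
      exact div_le_div₀ (le_trans (hMpos _).le (hcomp j k)) (hcomp j k) (mul_pos hfj hfk) hfact
    have htk : (0 : ℝ) < t ^ (j + k) := by positivity
    calc m (j + k) * t ^ (j + k)
        ≤ (C ^ (j + k) * N j * N k / ((j.factorial : ℝ) * k.factorial)) * t ^ (j + k) := by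
          exact mul_le_mul_of_nonneg_right hstep htk.le
      _ = a j * a k := by
          simp only [ha, hn, hsdef]
          rw [mul_pow, mul_pow, pow_add, pow_add]
          field_simp
  -- conclude
  have step1 : ∀ k, (⨅ i : ℕ, m i * t ^ i) ≤ I * a k := by
    intro k
    have : (⨅ i : ℕ, m i * t ^ i) / a k ≤ I :=
      le_ciInf fun j => (div_le_iff₀ (hapos k)).2 (key j k)
    calc (⨅ i : ℕ, m i * t ^ i) = (⨅ i : ℕ, m i * t ^ i) / a k * a k := by
          rw [div_mul_cancel₀ _ (hapos k).ne']
      _ ≤ I * a k := mul_le_mul_of_nonneg_right this (hapos k).le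
  rcases eq_or_lt_of_le hInonneg with h0 | hIpos
  · have := step1 0
    rw [← h0, zero_mul] at this
    calc (⨅ i : ℕ, m i * t ^ i) ≤ 0 := this
      _ ≤ I ^ 2 := sq_nonneg I
  · have : (⨅ i : ℕ, m i * t ^ i) / I ≤ I :=
      le_ciInf fun k => (div_le_iff₀' hIpos).2 (step1 k)
    rw [div_le_iff₀ hIpos] at this
    calc (⨅ i : ℕ, m i * t ^ i) ≤ I * I := this
      _ = I ^ 2 := (sq I).symm
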